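/- Let α ∈ (0, π/3), write α = (1−z)π/3 with 0 < z ≤ 1 − (6/π) arcsin(1/(2(1+δ))), and let L ≥ 1/(2 sin(α/2)). Then (1/2)𝒱^δ(L) ≥ z − 1/2, where 𝒱^δ(r) = −1 + (r−1)/δ for 1 ≤ r ≤ 1+δ and 𝒱^δ(r) = 0 for r > 1+δ, provided 0 < δ < 1/(2 sin(π/7)) − 1. -/

import Mathlib

open Real

/-- The soft disc potential (real-valued, for arguments `r ≥ 1`):
`-1 + (r-1)/δ` on `[1, 1+δ]` and `0` for `r > 1+δ`. -/
noncomputable def softV (δ r : ℝ) : ℝ :=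
  if r ≤ 1 + δ then -1 + (r - 1) / δ else 0

set_option maxHeartbeats 1000000 in
theorem half_potential_lower_bound (δ : ℝ) (hδ0 : 0 < δ)
    (hδ1 : δ < 1 / (2 * Real.sin (π / 7)) - 1)
    (α z L : ℝ) (hα : α ∈ Set.Ioo 0 (π / 3))
    (hz0 : 0 < z) (hz1 : z ≤ 1 - (6 / π) * Real.arcsin (1 / (2 * (1 + δ))))
    (hαz : α = (1 - z) * π / 3)
    (hL : L ≥ 1 / (2 * Real.sin (α / 2))) :
    (1 / 2) * softV δ L ≥ z - 1 / 2 := by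
  obtain ⟨hα0, hα1⟩ := hα
  have hpi1 : (3.1415 : ℝ) < π := by linarith [Real.pi_gt_d6]
  have hpi2 : π < 3.1416 := Real.pi_lt_d6.trans (by norm_num)
  -- δ < 1/4
  have hsin7 : Real.sin (π / 7) > 2 / 5 := by
    have h0 : (0 : ℝ) < π / 7 := by positivity
    have h1 : π / 7 ≤ 1 := by linarith
    have h2 := Real.sin_gt_sub_cube h0
    have h3 : π / 7 ≤ 0.449 := by linarith
    have h4 : (π / 7) ^ 3 ≤ 0.449 ^ 3 := pow_le_pow_left₀ h0.le h3 3
    nlinarith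
  have hδ4 : δ < 1 / 4 := by
    have hs : 0 < Real.sin (π / 7) := by linarith
    have h5 : 1 / (2 * Real.sin (π / 7)) ≤ 5 / 4 := by
      rw [div_le_iff₀ (by linarith)]; nlinarith
    linarith
  -- z ≤ 1/2
  have hz2 : z ≤ 1 / 2 := by
    have hc : Real.sin (π / 12) ≤ 1 / (2 * (1 + δ)) := by
      have h1 : Real.sin (π / 12) < π / 12 := Real.sin_lt (by positivity)
      have h2 : (0.4 : ℝ) ≤ 1 / (2 * (1 + δ)) := by
        rw [le_div_iff₀ (by linarith)]; nlinarith
      linarith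
    have harc : π / 12 ≤ Real.arcsin (1 / (2 * (1 + δ))) := by
      have h := Real.monotone_arcsin hc
      rwa [Real.arcsin_sin (by linarith [Real.pi_pos]) (by linarith [Real.pi_pos])] at h
    have hπpos : 0 < π := Real.pi_pos
    have h6 : (6 / π) * (π / 12) ≤ (6 / π) * Real.arcsin (1 / (2 * (1 + δ))) :=
      mul_le_mul_of_nonneg_left harc (by positivity)
    have h7 : (6 / π) * (π / 12) = 1 / 2 := by field_simp; norm_num
    linarith
  -- lower bound on L (only needed when L ≤ 1 + δ but harmless always)
  set t := z * π / 6 with ht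
  have ht0 : 0 < t := by rw [ht]; positivity
  have htub : t ≤ 0.27 := by rw [ht]; nlinarith
  have htz : t ≥ 0.52 * z := by rw [ht]; nlinarith
  have hsint : Real.sin t ≥ 0.98 * t := by
    have h := Real.sin_gt_sub_cube ht0
    have h4 : t ^ 3 ≤ 0.27 ^ 3 := pow_le_pow_left₀ ht0.le htub 3
    have h5 : t ^ 3 ≤ 0.08 * t := by nlinarith [mul_pos ht0 ht0]
    nlinarith
  have hcost : Real.cos t ≤ 1 := Real.cos_le_one t
  have hsqrt3 : 1.7 ≤ Real.sqrt 3 :=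
    (Real.le_sqrt (by norm_num) (by norm_num)).mpr (by norm_num)
  have hα2 : α / 2 = π / 6 - t := by rw [hαz, ht]; ring
  have hsval : Real.sin (α / 2) = (1 / 2) * Real.cos t - (Real.sqrt 3 / 2) * Real.sin t := by
    rw [hα2, Real.sin_sub, Real.sin_pi_div_six, Real.cos_pi_div_six]
  have hkey : 1.7 * (0.98 * t) ≤ Real.sqrt 3 * Real.sin t :=
    mul_le_mul hsqrt3 hsint (by linarith) (Real.sqrt_nonneg 3)
  have hub : 2 * Real.sin (α / 2) ≤ 1 - 0.8 * z := by
    rw [hsval]; linarith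
  have hspos : 0 < Real.sin (α / 2) :=
    Real.sin_pos_of_pos_of_lt_pi (by linarith) (by linarith [Real.pi_pos])
  have hLlb : L ≥ 1 + 2 * z * δ := by
    have h1 : 1 + 2 * z * δ ≤ 1 / (2 * Real.sin (α / 2)) := by
      rw [le_div_iff₀ (by linarith)]
      have hp : (0 : ℝ) ≤ 1 + 2 * z * δ := by nlinarith [mul_pos hz0 hδ0]
      have h8 := mul_le_mul_of_nonneg_left hub hp
      have h9 : z * (0.8 - 2 * δ) ≥ 0 := mul_nonneg hz0.le (by linarith)
      have h10 : (1 + 2 * z * δ) * (0.8 * z) ≥ 0.8 * z := by nlinarith [mul_pos (mul_pos hz0 hz0) hδ0]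
      nlinarith [mul_pos (mul_pos hz0 hz0) hδ0]
    linarith
  by_cases hcase : L ≤ 1 + δ
  · rw [softV, if_pos hcase]
    have h2 : 2 * z ≤ (L - 1) / δ := by
      rw [le_div_iff₀ hδ0]; nlinarith
    linarith
  · rw [softV, if_neg hcase]; linarith
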